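/- Let q be an odd prime power, f a quadratic form on F_{q^{s₁}} of even rank R with sign ε_f, α ∈ F_{q^{s₂}}*, β ∈ F_q, ε = η((-1)^{R/2})·ε_f, and s = s₁+s₂. For (u,v) with v = α/z for some z ∈ F_q* and u ∈ Im(L_f) with β + f(x_{zu}) = 0 (where L_f(x_{zu}) = -zu/2), the number of (x,y) ∈ F_{q^{s₁}} × F_{q^{s₂}} satisfying both f(x) + Tr_q^{q^{s₂}}(αy) = β and Tr_q^{q^{s₁}}(ux) + Tr_q^{q^{s₂}}(vy) = 0 equals q^{s-2}(1 + (q-1)·ε·q^{-R/2}). -/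

import Mathlib

open Module

/-- `f` restricted to the subspace `H` (of dimension `r`) is a quadratic form of
rank `R` and sign `ε`. -/
def HasRankSignOn {F E : Type*} [Field F] [Fintype F] [DecidableEq F]
    [AddCommGroup E] [Module F E] (f : QuadraticForm F E) (H : Submodule F E)
    (r R : ℕ) (ε : ℤ) : Prop :=
  ∃ (hRr : R ≤ r) (b : Basis (Fin r) F H) (lam : Fin R → F),
    (∀ i, lam i ≠ 0) ∧
    (∀ x : H, f (x : E) = ∑ i : Fin R, lam i * (b.repr x (Fin.castLE hRr i)) ^ 2) ∧
    ε = quadraticChar F (∏ i, lam i)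


section Aux

open Finset

variable {F : Type*} [Field F] [Fintype F] [DecidableEq F]

lemma key_sum (hq : ringChar F ≠ 2) (a : F) :
    ∑ s : F, quadraticChar F (s * (a - s))
      = quadraticChar F (-1) * (if a = 0 then ((Fintype.card F : ℤ) - 1) else -1) := by
  rcases eq_or_ne a 0 with rfl | ha
  · rw [if_pos rfl]
    have h1 : ∀ s : F, quadraticChar F (s * (0 - s))
        = quadraticChar F (-1) * (quadraticChar F s) ^ 2 := by
      intro s
      have : s * (0 - s) = (-1) * s ^ 2 := by ring
      rw [this, map_mul, map_pow]
    simp_rw [h1, ← Finset.mul_sum]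
    congr 1
    have h2 : ∀ s : F, (quadraticChar F s) ^ 2 = if s = 0 then 0 else 1 := by
      intro s
      rcases eq_or_ne s 0 with rfl | hs
      · simp
      · rw [if_neg hs, quadraticChar_sq_one hs]
    simp_rw [h2]
    have h3 : (∑ x : F, if x = 0 then (0:ℤ) else 1)
        = ∑ x : F, (1 - if x = 0 then (1:ℤ) else 0) := by
      refine Finset.sum_congr rfl fun x _ => by split <;> ring
    rw [h3, Finset.sum_sub_distrib, Finset.sum_const,
      Finset.sum_ite_eq' Finset.univ (0:F) (fun _ => (1:ℤ))]
    simp [Finset.card_univ]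
  · rw [if_neg ha]
    have h0 : ∑ s : F, quadraticChar F (s * (a - s))
        = ∑ s ∈ Finset.univ.erase (0 : F), quadraticChar F (s * (a - s)) := by
      rw [Finset.sum_erase _ (by simp)]
    rw [h0]
    have h2 : ∑ s ∈ Finset.univ.erase (0 : F), quadraticChar F (s * (a - s))
        = ∑ t ∈ Finset.univ.erase (-1 : F), quadraticChar F t := by
      refine Finset.sum_nbij' (fun s => a * s⁻¹ - 1) (fun t => a * (t + 1)⁻¹) ?_ ?_ ?_ ?_ ?_
      · intro s hs
        have hs0 : s ≠ 0 := Finset.ne_of_mem_erase hs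
        refine Finset.mem_erase.mpr ⟨?_, Finset.mem_univ _⟩
        intro h
        have h5 : a * s⁻¹ = 0 := by linear_combination h
        rcases mul_eq_zero.mp h5 with h6 | h6
        · exact ha h6
        · exact hs0 (inv_eq_zero.mp h6)
      · intro t ht
        have ht1 : t ≠ -1 := Finset.ne_of_mem_erase ht
        refine Finset.mem_erase.mpr ⟨?_, Finset.mem_univ _⟩
        have h1 : t + 1 ≠ 0 := fun h => ht1 (by linear_combination h)
        exact mul_ne_zero ha (inv_ne_zero h1)
      · intro s hs
        have hs0 : s ≠ 0 := Finset.ne_of_mem_erase hs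
        field_simp
        rw [sub_add_cancel, div_self ha]
      · intro t ht
        have ht1 : t ≠ -1 := Finset.ne_of_mem_erase ht
        have h1 : t + 1 ≠ 0 := fun h => ht1 (by linear_combination h)
        field_simp
        ring
      · intro s hs
        have hs0 : s ≠ 0 := Finset.ne_of_mem_erase hs
        have h4 : s * (a - s) = (a * s⁻¹ - 1) * s ^ 2 := by field_simp
        rw [h4, map_mul, quadraticChar_sq_one' hs0, mul_one]
    rw [h2]
    have h3 := Finset.add_sum_erase Finset.univ (fun t => quadraticChar F t) (Finset.mem_univ (-1 : F))
    rw [quadraticChar_sum_zero hq] at h3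
    linarith

lemma card_mu_sq (hq : ringChar F ≠ 2) {μ : F} (hμ : μ ≠ 0) (s : F) :
    ((Finset.univ.filter (fun t : F => μ * t ^ 2 = s)).card : ℤ)
      = quadraticChar F (μ * s) + 1 := by
  have hset : Finset.univ.filter (fun t : F => μ * t ^ 2 = s)
      = Set.toFinset {x : F | x ^ 2 = μ⁻¹ * s} := by
    ext t
    simp only [Finset.mem_filter, Finset.mem_univ, true_and, Set.mem_toFinset, Set.mem_setOf_eq]
    rw [eq_inv_mul_iff_mul_eq₀ hμ]
  rw [hset, quadraticChar_card_sqrts hq]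
  have hx : μ⁻¹ * s = (μ * s) * (μ⁻¹) ^ 2 := by field_simp
  rw [hx, map_mul, quadraticChar_sq_one' (inv_ne_zero hμ), mul_one]

lemma sum_sq_subst (hq : ringChar F ≠ 2) {μ : F} (hμ : μ ≠ 0) (h : F → ℚ) :
    ∑ t : F, h (μ * t ^ 2) = ∑ s : F, (1 + (quadraticChar F (μ * s) : ℚ)) * h s := by
  have h1 : ∑ t : F, h (μ * t ^ 2)
      = ∑ s : F, ∑ t ∈ Finset.univ.filter (fun t : F => μ * t ^ 2 = s), h (μ * t ^ 2) := by
    rw [← Finset.sum_fiberwise Finset.univ (fun t : F => μ * t ^ 2) (fun t => h (μ * t ^ 2))]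
  rw [h1]
  refine Finset.sum_congr rfl fun s _ => ?_
  have h2 : ∑ t ∈ Finset.univ.filter (fun t : F => μ * t ^ 2 = s), h (μ * t ^ 2)
      = ∑ t ∈ Finset.univ.filter (fun t : F => μ * t ^ 2 = s), h s := by
    refine Finset.sum_congr rfl fun t ht => ?_
    rw [(Finset.mem_filter.mp ht).2]
  rw [h2, Finset.sum_const, nsmul_eq_mul]
  have h3 : ((Finset.univ.filter (fun t : F => μ * t ^ 2 = s)).card : ℚ)
      = (quadraticChar F (μ * s) : ℚ) + 1 := by exact_mod_cast card_mu_sq hq hμ s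
  rw [h3]; ring
variable {F : Type*} [Field F] [Fintype F] [DecidableEq F]

lemma count_succ (n : ℕ) (lam : Fin (n+1) → F) (a : F) :
    Nat.card {c : Fin (n+1) → F // ∑ i, lam i * c i ^ 2 = a}
      = ∑ t : F, Nat.card {d : Fin n → F //
          ∑ i, lam i.succ * d i ^ 2 = a - lam 0 * t ^ 2} := by
  have e1 : {c : Fin (n+1) → F // ∑ i, lam i * c i ^ 2 = a}
      ≃ {p : F × (Fin n → F) // lam 0 * p.1 ^ 2 + ∑ i, lam i.succ * p.2 i ^ 2 = a} := by
    refine (Fin.consEquiv fun _ : Fin (n+1) => F).symm.subtypeEquiv fun c => ?_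
    rw [Fin.sum_univ_succ]
    rfl
  have e2 : {p : F × (Fin n → F) // lam 0 * p.1 ^ 2 + ∑ i, lam i.succ * p.2 i ^ 2 = a}
      ≃ Σ t : F, {d : Fin n → F // ∑ i, lam i.succ * d i ^ 2 = a - lam 0 * t ^ 2} := by
    refine (Equiv.subtypeProdEquivSigmaSubtype
      (fun (t : F) (d : Fin n → F) => lam 0 * t ^ 2 + ∑ i, lam i.succ * d i ^ 2 = a)).trans ?_
    refine Equiv.sigmaCongrRight fun t => Equiv.subtypeEquivRight fun d => ?_
    rw [eq_sub_iff_add_eq, add_comm]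
  rw [Nat.card_congr (e1.trans e2), Nat.card_eq_fintype_card, Fintype.card_sigma]
  refine Finset.sum_congr rfl fun t _ => (Nat.card_eq_fintype_card).symm

lemma sumA1 (a : F) : ∑ s : F, (if a - s = 0 then (1:ℚ) else 0) = 1 := by
  have h : ∀ s : F, (if a - s = 0 then (1:ℚ) else 0) = if s = a then 1 else 0 := by
    intro s; congr 1; simp [sub_eq_zero, eq_comm]
  simp_rw [h]
  simp

lemma sumA2 (hq : ringChar F ≠ 2) {μ : F} (hμ : μ ≠ 0) :
    ∑ s : F, (quadraticChar F (μ * s) : ℚ) = 0 := by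
  simp_rw [map_mul]
  push_cast
  rw [← Finset.mul_sum]
  have h : ∑ s : F, ((quadraticChar F s : ℤ) : ℚ) = 0 := by
    exact_mod_cast congrArg (fun x : ℤ => (x : ℚ)) (quadraticChar_sum_zero hq)
  rw [h, mul_zero]

lemma sumA3 (μ : F) (a : F) :
    ∑ s : F, (quadraticChar F (μ * s) : ℚ) * (if a - s = 0 then 1 else 0)
      = (quadraticChar F (μ * a) : ℚ) := by
  have h : ∀ s : F, (quadraticChar F (μ * s) : ℚ) * (if a - s = 0 then 1 else 0)
      = if s = a then (quadraticChar F (μ * s) : ℚ) else 0 := by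
    intro s
    rcases eq_or_ne s a with rfl | hs
    · simp
    · rw [if_neg hs, if_neg (by simpa [sub_eq_zero, eq_comm] using hs), mul_zero]
  simp_rw [h]
  simp


lemma sumA4 (hq : ringChar F ≠ 2) {c : F} (hc : c ≠ 0) (a : F) :
    ∑ s : F, (quadraticChar F (c * (a - s)) : ℚ) = 0 := by
  have h := Equiv.sum_comp (Equiv.subLeft a) (fun w => (quadraticChar F (c * w) : ℚ))
  simp only [Equiv.subLeft_apply] at h
  rw [h]
  exact sumA2 hq hc

lemma sumA5 (hq : ringChar F ≠ 2) (μ D : F) (a : F) :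
    ∑ s : F, (quadraticChar F (μ * s) : ℚ) * (quadraticChar F (D * (a - s)) : ℚ)
      = (quadraticChar F (μ * D * (-1)) : ℚ)
          * ((Fintype.card F : ℚ) * (if a = 0 then 1 else 0) - 1) := by
  have h1 : ∀ s : F, (quadraticChar F (μ * s) : ℚ) * (quadraticChar F (D * (a - s)) : ℚ)
      = (quadraticChar F (μ * D) : ℚ) * (quadraticChar F (s * (a - s)) : ℚ) := by
    intro s
    have hx : μ * s * (D * (a - s)) = μ * D * (s * (a - s)) := by ring
    push_cast [← map_mul, hx, map_mul]
    ring
  simp_rw [h1, ← Finset.mul_sum]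
  have h0 := key_sum hq a
  have h2 : ∑ s : F, (quadraticChar F (s * (a - s)) : ℚ)
      = (quadraticChar F (-1) : ℚ) * (if a = 0 then ((Fintype.card F : ℚ) - 1) else -1) := by
    rcases eq_or_ne a 0 with rfl | ha
    · rw [if_pos rfl] at h0 ⊢; exact_mod_cast congrArg (Int.cast : ℤ → ℚ) h0
    · rw [if_neg ha] at h0 ⊢; exact_mod_cast congrArg (Int.cast : ℤ → ℚ) h0
  rw [h2]
  have hm : ((quadraticChar F (μ * D * (-1)) : ℤ) : ℚ)
      = ((quadraticChar F (μ * D) : ℤ) : ℚ) * ((quadraticChar F (-1) : ℤ) : ℚ) := by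
    rw [map_mul]; push_cast; ring
  rw [hm]
  split_ifs <;> ring

/-- the error term in the point count of a diagonal quadratic form -/
def Eterm (F : Type*) [Field F] [Fintype F] [DecidableEq F]
    (n : ℕ) (lam : Fin n → F) (a : F) : ℚ :=
  if Even n then
    (quadraticChar F ((-1)^(n/2) * ∏ i, lam i) : ℚ)
      * ((Fintype.card F : ℚ) * (if a = 0 then 1 else 0) - 1) * (Fintype.card F : ℚ)^(n/2)
  else (quadraticChar F ((-1)^(n/2) * (∏ i, lam i) * a) : ℚ) * (Fintype.card F : ℚ)^(n/2+1)

lemma diag_count (hq : ringChar F ≠ 2) :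
    ∀ (n : ℕ) (lam : Fin n → F), (∀ i, lam i ≠ 0) → ∀ a : F,
    (Nat.card {c : Fin n → F // ∑ i, lam i * c i ^ 2 = a} : ℚ) * (Fintype.card F : ℚ)
      = (Fintype.card F : ℚ)^n + Eterm F n lam a := by
  intro n
  induction n with
  | zero =>
    intro lam _ a
    rcases eq_or_ne a 0 with rfl | ha
    · have h : Nat.card {c : Fin 0 → F // ∑ i, lam i * c i ^ 2 = 0} = 1 := by
        rw [Nat.card_eq_fintype_card, Fintype.card_eq_one_iff]
        refine ⟨⟨fun i => i.elim0, by simp⟩, fun y => ?_⟩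
        ext i; exact i.elim0
      rw [h, Eterm]
      simp
    · have h : Nat.card {c : Fin 0 → F // ∑ i, lam i * c i ^ 2 = a} = 0 := by
        rw [Nat.card_eq_fintype_card, Fintype.card_eq_zero_iff]
        exact ⟨fun x => ha (by simpa using x.2.symm)⟩
      rw [h, Eterm]
      simp [ha]
  | succ n ih =>
    intro lam hlam a
    have hμ : lam 0 ≠ 0 := hlam 0
    rw [count_succ n lam a]
    push_cast
    rw [Finset.sum_mul]
    have hIH : ∀ t : F,
        (Nat.card {d : Fin n → F // ∑ i, lam i.succ * d i ^ 2 = a - lam 0 * t ^ 2} : ℚ)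
            * (Fintype.card F : ℚ)
          = (Fintype.card F : ℚ)^n + Eterm F n (fun i => lam i.succ) (a - lam 0 * t ^ 2) :=
      fun t => ih (fun i => lam i.succ) (fun i => hlam i.succ) _
    rw [Finset.sum_congr rfl fun t _ => hIH t, Finset.sum_add_distrib, Finset.sum_const,
      Finset.card_univ, nsmul_eq_mul]
    have hmain : ∑ t : F, Eterm F n (fun i => lam i.succ) (a - lam 0 * t ^ 2)
        = Eterm F (n+1) lam a := by
      rw [sum_sq_subst hq hμ (fun s => Eterm F n (fun i => lam i.succ) (a - s))]
      simp_rw [add_mul, one_mul, Finset.sum_add_distrib]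
      rcases Nat.even_or_odd n with he | ho
      · -- n even, n+1 odd
        obtain ⟨k, hk⟩ := he
        have hn2 : n / 2 = k := by omega
        have hn12 : (n+1) / 2 = k := by omega
        have hEt : ∀ b : F, Eterm F n (fun i => lam i.succ) b
            = (quadraticChar F ((-1)^k * ∏ i : Fin n, lam i.succ) : ℚ)
              * ((Fintype.card F : ℚ) * (if b = 0 then 1 else 0) - 1)
              * (Fintype.card F : ℚ)^k := by
          intro b
          rw [Eterm, if_pos ⟨k, hk⟩, hn2]
        simp_rw [hEt]
        have h1 : ∑ s : F, (quadraticChar F ((-1)^k * ∏ i : Fin n, lam i.succ) : ℚ)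
            * ((Fintype.card F : ℚ) * (if a - s = 0 then (1:ℚ) else 0) - 1)
            * (Fintype.card F : ℚ)^k = 0 := by
          have e1 : ∀ s : F, (quadraticChar F ((-1)^k * ∏ i : Fin n, lam i.succ) : ℚ)
              * ((Fintype.card F : ℚ) * (if a - s = 0 then (1:ℚ) else 0) - 1)
              * (Fintype.card F : ℚ)^k
              = ((quadraticChar F ((-1)^k * ∏ i : Fin n, lam i.succ) : ℚ)
                  * (Fintype.card F : ℚ)^k * (Fintype.card F : ℚ))
                  * (if a - s = 0 then (1:ℚ) else 0)
                - (quadraticChar F ((-1)^k * ∏ i : Fin n, lam i.succ) : ℚ)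
                  * (Fintype.card F : ℚ)^k := fun s => by ring
          simp_rw [e1, Finset.sum_sub_distrib, ← Finset.mul_sum, sumA1, Finset.sum_const,
            Finset.card_univ, nsmul_eq_mul, mul_one]
          ring
        have h2 : ∑ s : F, (quadraticChar F (lam 0 * s) : ℚ)
            * ((quadraticChar F ((-1)^k * ∏ i : Fin n, lam i.succ) : ℚ)
                * ((Fintype.card F : ℚ) * (if a - s = 0 then (1:ℚ) else 0) - 1)
                * (Fintype.card F : ℚ)^k)
            = (quadraticChar F ((-1)^k * ∏ i : Fin n, lam i.succ) : ℚ)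
                * (Fintype.card F : ℚ)^(k+1) * (quadraticChar F (lam 0 * a) : ℚ) := by
          have e2 : ∀ s : F, (quadraticChar F (lam 0 * s) : ℚ)
              * ((quadraticChar F ((-1)^k * ∏ i : Fin n, lam i.succ) : ℚ)
                  * ((Fintype.card F : ℚ) * (if a - s = 0 then (1:ℚ) else 0) - 1)
                  * (Fintype.card F : ℚ)^k)
              = ((quadraticChar F ((-1)^k * ∏ i : Fin n, lam i.succ) : ℚ)
                    * (Fintype.card F : ℚ)^k * (Fintype.card F : ℚ))
                  * ((quadraticChar F (lam 0 * s) : ℚ) * (if a - s = 0 then (1:ℚ) else 0))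
                - ((quadraticChar F ((-1)^k * ∏ i : Fin n, lam i.succ) : ℚ)
                    * (Fintype.card F : ℚ)^k)
                  * (quadraticChar F (lam 0 * s) : ℚ) := fun s => by ring
          simp_rw [e2, Finset.sum_sub_distrib, ← Finset.mul_sum, sumA3, sumA2 hq hμ, mul_zero]
          ring
        rw [h1, h2, zero_add]
        have hodd : ¬ Even (n+1) := by rw [Nat.even_iff]; omega
        rw [Eterm, if_neg hodd, hn12]
        have harg : ((-1 : F)^k * ∏ i : Fin (n+1), lam i) * a
            = ((-1)^k * ∏ i : Fin n, lam i.succ) * (lam 0 * a) := by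
          rw [Fin.prod_univ_succ]; ring
        have hsplit : (quadraticChar F ((-1 : F)^k * (∏ i : Fin (n+1), lam i) * a) : ℚ)
            = (quadraticChar F ((-1)^k * ∏ i : Fin n, lam i.succ) : ℚ)
              * (quadraticChar F (lam 0 * a) : ℚ) := by
          rw [← Int.cast_mul, ← map_mul, harg]
        rw [hsplit]
        ring
      · -- n odd, n+1 even
        obtain ⟨k, hk⟩ := ho
        have hn2 : n / 2 = k := by omega
        have hn12 : (n+1) / 2 = k + 1 := by omega
        have hD0 : ((-1 : F)^k * ∏ i : Fin n, lam i.succ) ≠ 0 := by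
          apply mul_ne_zero
          · exact pow_ne_zero _ (neg_ne_zero.mpr one_ne_zero)
          · exact Finset.prod_ne_zero_iff.mpr fun (i : Fin n) _ => hlam i.succ
        have hEt : ∀ b : F, Eterm F n (fun i => lam i.succ) b
            = (quadraticChar F (((-1)^k * ∏ i : Fin n, lam i.succ) * b) : ℚ)
              * (Fintype.card F : ℚ)^(k+1) := by
          intro b
          rw [Eterm, if_neg (by rw [Nat.even_iff]; omega), hn2]
        simp_rw [hEt]
        have h1 : ∑ s : F, (quadraticChar F (((-1)^k * ∏ i : Fin n, lam i.succ) * (a - s)) : ℚ)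
            * (Fintype.card F : ℚ)^(k+1) = 0 := by
          rw [← Finset.sum_mul, sumA4 hq hD0, zero_mul]
        have h2 : ∑ s : F, (quadraticChar F (lam 0 * s) : ℚ)
            * ((quadraticChar F (((-1)^k * ∏ i : Fin n, lam i.succ) * (a - s)) : ℚ)
                * (Fintype.card F : ℚ)^(k+1))
            = (quadraticChar F (lam 0 * ((-1)^k * ∏ i : Fin n, lam i.succ) * (-1)) : ℚ)
                * ((Fintype.card F : ℚ) * (if a = 0 then 1 else 0) - 1)
                * (Fintype.card F : ℚ)^(k+1) := by
          have e2 : ∀ s : F, (quadraticChar F (lam 0 * s) : ℚ)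
              * ((quadraticChar F (((-1)^k * ∏ i : Fin n, lam i.succ) * (a - s)) : ℚ)
                  * (Fintype.card F : ℚ)^(k+1))
              = ((quadraticChar F (lam 0 * s) : ℚ)
                  * (quadraticChar F (((-1)^k * ∏ i : Fin n, lam i.succ) * (a - s)) : ℚ))
                  * (Fintype.card F : ℚ)^(k+1) := fun s => by ring
          simp_rw [e2, ← Finset.sum_mul, sumA5 hq (lam 0) ((-1)^k * ∏ i : Fin n, lam i.succ) a]
        rw [h1, h2, zero_add]
        have heven1 : Even (n+1) := by rw [Nat.even_iff]; omega
        rw [Eterm, if_pos heven1, hn12]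
        have harg : ((-1 : F)^(k+1) * ∏ i : Fin (n+1), lam i)
            = lam 0 * ((-1)^k * ∏ i : Fin n, lam i.succ) * (-1) := by
          rw [Fin.prod_univ_succ]; ring
        rw [harg]
    rw [hmain]
    ring

lemma fiber_count {F E : Type*} [Field F] [Fintype F] [Field E] [Fintype E] [Algebra F E]
    {v : E} (hv : v ≠ 0) (c : F) :
    (Nat.card {y : E // Algebra.trace F E (v * y) = c} : ℚ) * (Fintype.card F : ℚ)
      = (Fintype.card F : ℚ) ^ (finrank F E) := by
  classical
  set φ : E →ₗ[F] F := (Algebra.trace F E).comp (LinearMap.mulLeft F v) with hφ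
  have hφa : ∀ y : E, φ y = Algebra.trace F E (v * y) := fun y => rfl
  have hsurj : Function.Surjective φ := by
    have h1 : Function.Surjective (Algebra.trace F E) := Algebra.trace_surjective F E
    have h2 : Function.Surjective (LinearMap.mulLeft F v) := by
      intro x
      exact ⟨v⁻¹ * x, by simp [LinearMap.mulLeft_apply, ← mul_assoc, mul_inv_cancel₀ hv]⟩
    exact h1.comp h2
  obtain ⟨y₀, hy₀⟩ := hsurj c
  have e : {y : E // Algebra.trace F E (v * y) = c} ≃ LinearMap.ker φ := by
    refine ⟨fun y => ⟨y.1 - y₀, ?_⟩, fun w => ⟨w.1 + y₀, ?_⟩, fun y => by simp, fun w => by simp⟩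
    · rw [LinearMap.mem_ker, map_sub, hy₀, hφa, y.2, sub_self]
    · rw [← hφa, map_add, hy₀, LinearMap.mem_ker.mp w.2, zero_add]
  rw [Nat.card_congr e]
  haveI : Fintype (LinearMap.ker φ) := Fintype.ofFinite _
  rw [Nat.card_eq_fintype_card, card_eq_pow_finrank (K := F) (V := LinearMap.ker φ)]
  have hrk : finrank F (LinearMap.ker φ) + 1 = finrank F E := by
    have h3 := LinearMap.finrank_range_add_finrank_ker φ
    rw [LinearMap.range_eq_top.mpr hsurj, finrank_top, finrank_self] at h3
    omega
  rw [← hrk]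
  push_cast
  ring

lemma form_count {F E : Type*} [Field F] [Fintype F] [DecidableEq F]
    [AddCommGroup E] [Module F E] [Fintype E] (hq : ringChar F ≠ 2)
    (f : QuadraticForm F E) {R : ℕ} {εf : ℤ}
    (hf : HasRankSignOn f ⊤ (finrank F E) R εf) (heven : Even R) :
    (Nat.card {x : E // f x = 0} : ℚ) * (Fintype.card F : ℚ)
      = (Fintype.card F : ℚ)^(finrank F E - R)
          * ((Fintype.card F : ℚ)^R
            + (quadraticChar F ((-1)^(R/2)) : ℚ) * (εf : ℚ)
              * ((Fintype.card F : ℚ) - 1) * (Fintype.card F : ℚ)^(R/2)) := by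
  classical
  obtain ⟨hRr, b, lam, hlam0, hdiag, hsign⟩ := hf
  have hrr : finrank F E = finrank F E := rfl
  -- coordinates
  set g : E ≃ (Fin (finrank F E) → F) :=
    (Submodule.topEquiv.symm.trans b.equivFun).toEquiv with hg
  have hgf : ∀ x : E, f x = ∑ i : Fin R, lam i * (g x (Fin.castLE hRr i)) ^ 2 := by
    intro x
    have h1 := hdiag (Submodule.topEquiv.symm x)
    have h2 : ((Submodule.topEquiv.symm x : (⊤ : Submodule F E)) : E) = x := rfl
    rw [h2] at h1
    rw [h1]
    refine Finset.sum_congr rfl fun i _ => ?_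
    simp [hg, Basis.equivFun_apply]
  have e1 : {x : E // f x = 0}
      ≃ {c : Fin (finrank F E) → F // ∑ i : Fin R, lam i * (c (Fin.castLE hRr i)) ^ 2 = 0} :=
    g.subtypeEquiv fun x => by rw [hgf x]
  have hrR : R + (finrank F E - R) = finrank F E := by omega
  set eSum : (Fin R ⊕ Fin (finrank F E - R)) ≃ Fin (finrank F E) := finSumFinEquiv.trans (finCongr hrR) with heSum
  have heSumL : ∀ i : Fin R, eSum (Sum.inl i) = Fin.castLE hRr i := by
    intro i
    apply Fin.ext
    simp [heSum, finCongr]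
  set eArr : (Fin (finrank F E) → F) ≃ ((Fin R → F) × (Fin (finrank F E - R) → F)) :=
    ((Equiv.arrowCongr eSum (Equiv.refl F)).symm.trans
      (Equiv.sumArrowEquivProdArrow _ _ F)) with heArr
  have heArr1 : ∀ (c : Fin (finrank F E) → F) (i : Fin R), (eArr c).1 i = c (Fin.castLE hRr i) := by
    intro c i
    simp [heArr, Equiv.sumArrowEquivProdArrow, Equiv.arrowCongr, heSumL i]
  have e2 : {c : Fin (finrank F E) → F // ∑ i : Fin R, lam i * (c (Fin.castLE hRr i)) ^ 2 = 0}
      ≃ {p : (Fin R → F) × (Fin (finrank F E - R) → F) // ∑ i : Fin R, lam i * (p.1 i) ^ 2 = 0} :=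
    eArr.subtypeEquiv fun c => by
      constructor
      · intro h; rw [← h]; exact Finset.sum_congr rfl fun i _ => by rw [heArr1 c i]
      · intro h; rw [← h]; exact Finset.sum_congr rfl fun i _ => by rw [heArr1 c i]
  have e3 : {p : (Fin R → F) × (Fin (finrank F E - R) → F) // ∑ i : Fin R, lam i * (p.1 i) ^ 2 = 0}
      ≃ ({d : Fin R → F // ∑ i : Fin R, lam i * (d i) ^ 2 = 0} × (Fin (finrank F E - R) → F)) :=
    { toFun := fun p => (⟨p.1.1, p.2⟩, p.1.2)
      invFun := fun q => ⟨(q.1.1, q.2), q.1.2⟩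
      left_inv := fun p => rfl
      right_inv := fun q => rfl }
  rw [Nat.card_congr ((e1.trans e2).trans e3), Nat.card_prod]
  have hfun : Nat.card (Fin (finrank F E - R) → F) = Fintype.card F ^ (finrank F E - R) := by
    rw [Nat.card_eq_fintype_card, Fintype.card_fun, Fintype.card_fin]
  rw [hfun]
  push_cast
  rw [mul_comm ((Nat.card {d : Fin R → F // ∑ i : Fin R, lam i * (d i) ^ 2 = 0} : ℚ)) _,
    mul_assoc]
  congr 1
  have hd := diag_count hq R lam hlam0 0
  rw [hd]
  rw [Eterm, if_pos heven, if_pos rfl]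
  have hx : (quadraticChar F ((-1)^(R/2) * ∏ i, lam i) : ℚ)
      = (quadraticChar F ((-1)^(R/2)) : ℚ) * (εf : ℚ) := by
    rw [map_mul]
    push_cast
    rw [hsign]
  rw [hx]
  ring

end Aux

/-- Let `f` have even rank `R` and sign `ε_f`, `ε = η((-1)^{R/2})ε_f`,
`α = z v` with `z ∈ F_q*`, `u ∈ Im L_f` with `L_f(x_{zu}) = -zu/2` and
`β + f(x_{zu}) = 0`. Then the number of `(x,y)` with `f(x) + Tr(αy) = β` and
`Tr(ux) + Tr(vy) = 0` is `q^{s-2}(1 + (q-1) ε q^{-R/2})`. -/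
theorem stmt_18 (F : Type*) [Field F] [Fintype F] [DecidableEq F]
    (hq : ringChar F ≠ 2)
    (E₁ E₂ : Type*) [Field E₁] [Field E₂] [Algebra F E₁] [Algebra F E₂]
    [Fintype E₁] [Fintype E₂]
    (f : QuadraticForm F E₁) (L : E₁ →ₗ[F] E₁)
    (hfL : ∀ x : E₁, f x = Algebra.trace F E₁ (x * L x))
    (hsym : ∀ x y : E₁, Algebra.trace F E₁ (x * L y) = Algebra.trace F E₁ (y * L x))
    (R : ℕ) (εf : ℤ) (hf : HasRankSignOn f ⊤ (finrank F E₁) R εf) (heven : Even R)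
    (α : E₂) (hα : α ≠ 0) (β : F)
    (z : F) (hz : z ≠ 0) (v : E₂) (hv : α = z • v)
    (u : E₁) (xzu : E₁) (hxzu : L xzu = -(z • u) / 2) (hβ : β + f xzu = 0) :
    (Nat.card {xy : E₁ × E₂ //
        f xy.1 + Algebra.trace F E₂ (α * xy.2) = β ∧
        Algebra.trace F E₁ (u * xy.1) + Algebra.trace F E₂ (v * xy.2) = 0} : ℚ)
      = (Fintype.card F : ℚ) ^ (finrank F E₁ + finrank F E₂ - 2)
          * (1 + ((Fintype.card F : ℚ) - 1)
              * ((quadraticChar F ((-1) ^ (R / 2)) * εf : ℤ) : ℚ)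
              * (Fintype.card F : ℚ) ^ (-((R / 2 : ℕ) : ℤ))) := by
  classical
  have hq0 : (Fintype.card F : ℚ) ≠ 0 := by
    exact_mod_cast Fintype.card_ne_zero
  have h2F : (2 : F) ≠ 0 := Ring.two_ne_zero hq
  have h2E : (2 : E₁) ≠ 0 := by
    intro h
    apply h2F
    apply (algebraMap F E₁).injective
    rw [map_ofNat, h, map_zero]
  have hv0 : v ≠ 0 := by
    rintro rfl
    rw [smul_zero] at hv
    exact hα hv
  -- decompose over x
  have hdec : Nat.card {xy : E₁ × E₂ //
        f xy.1 + Algebra.trace F E₂ (α * xy.2) = β ∧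
        Algebra.trace F E₁ (u * xy.1) + Algebra.trace F E₂ (v * xy.2) = 0}
      = ∑ x : E₁, Nat.card {y : E₂ // f x + Algebra.trace F E₂ (α * y) = β ∧
          Algebra.trace F E₁ (u * x) + Algebra.trace F E₂ (v * y) = 0} := by
    rw [Nat.card_congr (Equiv.subtypeProdEquivSigmaSubtype
      (fun (x : E₁) (y : E₂) => f x + Algebra.trace F E₂ (α * y) = β ∧
          Algebra.trace F E₁ (u * x) + Algebra.trace F E₂ (v * y) = 0)),
      Nat.card_eq_fintype_card, Fintype.card_sigma]
    exact Finset.sum_congr rfl fun x _ => (Nat.card_eq_fintype_card).symm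
  have hta : ∀ y : E₂, Algebra.trace F E₂ (α * y) = z * Algebra.trace F E₂ (v * y) := by
    intro y
    rw [hv, smul_mul_assoc, map_smul, smul_eq_mul]
  have hycount : ∀ x : E₁,
      (Nat.card {y : E₂ // f x + Algebra.trace F E₂ (α * y) = β ∧
          Algebra.trace F E₁ (u * x) + Algebra.trace F E₂ (v * y) = 0} : ℚ)
          * (Fintype.card F : ℚ)
        = if f x - z * Algebra.trace F E₁ (u * x) = β
            then (Fintype.card F : ℚ) ^ (finrank F E₂) else 0 := by
    intro x
    by_cases hc : f x - z * Algebra.trace F E₁ (u * x) = β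
    · have e : {y : E₂ // f x + Algebra.trace F E₂ (α * y) = β ∧
          Algebra.trace F E₁ (u * x) + Algebra.trace F E₂ (v * y) = 0}
          ≃ {y : E₂ // Algebra.trace F E₂ (v * y) = - Algebra.trace F E₁ (u * x)} := by
        refine Equiv.subtypeEquivRight fun y => ?_
        rw [hta y]
        constructor
        · rintro ⟨h1, h2⟩
          linear_combination h2
        · intro h
          constructor
          · rw [h]; linear_combination hc
          · rw [h]; ring
      rw [if_pos hc, Nat.card_congr e]
      exact fiber_count hv0 _
    · rw [if_neg hc]
      have hE : IsEmpty {y : E₂ // f x + Algebra.trace F E₂ (α * y) = β ∧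
          Algebra.trace F E₁ (u * x) + Algebra.trace F E₂ (v * y) = 0} := by
        refine ⟨fun y => hc ?_⟩
        obtain ⟨h1, h2⟩ := y.2
        rw [hta y.1] at h1
        linear_combination h1 - z * h2
      rw [Nat.card_of_isEmpty, Nat.cast_zero, zero_mul]
  -- the x-condition is a shifted zero set of f
  have hLx : L xzu = (-z / 2) • u := by
    rw [hxzu, div_eq_iff h2E, smul_mul_assoc]
    have hu2 : u * 2 = (2 : F) • u := by
      rw [Algebra.smul_def, map_ofNat, mul_comm]
    rw [hu2, smul_smul, div_mul_cancel₀ _ h2F, neg_smul]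
  have hshift : ∀ x : E₁, f (x + xzu) = f x - z * Algebra.trace F E₁ (u * x) + f xzu := by
    intro x
    rw [hfL, hfL, hfL, map_add]
    have hexp : (x + xzu) * (L x + L xzu)
        = x * L x + xzu * L xzu + (x * L xzu + xzu * L x) := by ring
    rw [hexp, map_add, map_add, map_add, hsym xzu x]
    simp only [hLx, mul_smul_comm, map_smul, smul_eq_mul, mul_comm x u]
    field_simp
    ring
  have econd : {x : E₁ // f x - z * Algebra.trace F E₁ (u * x) = β} ≃ {w : E₁ // f w = 0} := by
    refine (Equiv.addRight xzu).subtypeEquiv fun x => ?_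
    simp only [Equiv.coe_addRight]
    constructor
    · intro h
      rw [hshift x, h]
      linear_combination hβ
    · intro h
      rw [hshift x] at h
      linear_combination h - hβ
  -- sum it up
  have hsum : (Nat.card {xy : E₁ × E₂ //
        f xy.1 + Algebra.trace F E₂ (α * xy.2) = β ∧
        Algebra.trace F E₁ (u * xy.1) + Algebra.trace F E₂ (v * xy.2) = 0} : ℚ)
          * (Fintype.card F : ℚ)
      = (Fintype.card F : ℚ) ^ (finrank F E₂)
          * (Nat.card {w : E₁ // f w = 0} : ℚ) := by
    rw [hdec]
    push_cast
    rw [Finset.sum_mul, Finset.sum_congr rfl fun x _ => hycount x, Finset.sum_ite,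
      Finset.sum_const, Finset.sum_const, smul_zero, add_zero, nsmul_eq_mul]
    rw [← Fintype.card_subtype, ← Nat.card_eq_fintype_card, Nat.card_congr econd]
    ring
  -- zero count
  have hN0 := form_count hq f hf heven
  -- arithmetic
  obtain ⟨hRr, -⟩ := hf
  obtain ⟨k, hk⟩ := heven
  have hk2 : R / 2 = k := by omega
  have hs1 : 0 < finrank F E₁ := finrank_pos
  have hs2 : 0 < finrank F E₂ := finrank_pos
  set N : ℚ := (Nat.card {xy : E₁ × E₂ //
        f xy.1 + Algebra.trace F E₂ (α * xy.2) = β ∧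
        Algebra.trace F E₁ (u * xy.1) + Algebra.trace F E₂ (v * xy.2) = 0} : ℚ) with hN
  have hNq : N * (Fintype.card F : ℚ)^2
      = (Fintype.card F : ℚ) ^ (finrank F E₂)
          * ((Fintype.card F : ℚ)^(finrank F E₁ - R)
          * ((Fintype.card F : ℚ)^R
            + (quadraticChar F ((-1)^(R/2)) : ℚ) * (εf : ℚ)
              * ((Fintype.card F : ℚ) - 1) * (Fintype.card F : ℚ)^(R/2))) := by
    rw [pow_two, ← mul_assoc, hsum, mul_assoc, hN0]
  apply mul_right_cancel₀ (pow_ne_zero 2 hq0)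
  rw [hNq, hk2, hk]
  rw [zpow_neg, zpow_natCast]
  have hppow : (Fintype.card F : ℚ)^(finrank F E₁ + finrank F E₂ - 2) * (Fintype.card F : ℚ)^2
      = (Fintype.card F : ℚ)^(finrank F E₂) * (Fintype.card F : ℚ)^(finrank F E₁ - (k+k))
        * ((Fintype.card F : ℚ)^k * (Fintype.card F : ℚ)^k) := by
    rw [← pow_add, ← pow_add, ← pow_add, ← pow_add]
    congr 1
    omega
  have hstep : (Fintype.card F : ℚ) ^ (finrank F E₁ + finrank F E₂ - 2)
        * (1 + ((Fintype.card F : ℚ) - 1) * ((quadraticChar F ((-1) ^ k) * εf : ℤ) : ℚ)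
            * ((Fintype.card F : ℚ) ^ k)⁻¹)
        * (Fintype.card F : ℚ) ^ 2
      = (Fintype.card F : ℚ)^(finrank F E₂) * (Fintype.card F : ℚ)^(finrank F E₁ - (k+k))
        * ((Fintype.card F : ℚ)^k * (Fintype.card F : ℚ)^k)
        * (1 + ((Fintype.card F : ℚ) - 1) * ((quadraticChar F ((-1) ^ k) * εf : ℤ) : ℚ)
            * ((Fintype.card F : ℚ) ^ k)⁻¹) := by
    rw [← hppow]
    ring
  rw [hstep, pow_add (Fintype.card F : ℚ) k k]
  have hk0 : (Fintype.card F : ℚ)^k ≠ 0 := pow_ne_zero _ hq0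
  push_cast
  field_simp
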